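/- In a Unique Forward EOPL instance, if no UFV1 violation and no UFV2 violation exists, then the nodes form a single line starting at 0^d: every node w (S(w) ≠ w) is of the form w = S^k(0^d) for some k ≥ 0, where the cost strictly increases along the iterates S^0(0^d), S^1(0^d), …, S^k(0^d). -/
import Mathlib


/-- In a Unique Forward EOPL instance with no UFV1 violation and no UFV2 violation, the
nodes form a single line starting at `0^d`: every node `w` equals `S^[k](0^d)` for some
`k`, and the cost strictly increases along the iterates `S^[0](0^d), …, S^[k](0^d)`. -/
theorem single_line_of_no_violations
    (d : ℕ) (hd : 0 < d)
    (S : (Fin d → Bool) → (Fin d → Bool)) (c : (Fin d → Bool) → ℕ)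
    (hS : S (fun _ => false) ≠ (fun _ => false))
    (hc : c (fun _ => false) = 0)
    (hUFV1 : ¬ ∃ v w : Fin d → Bool, v ≠ w ∧ S v ≠ v ∧ S w ≠ w ∧
      (c v = c w ∨ (c v < c w ∧ c w < c (S v))))
    (hUFV2 : ¬ ∃ v w : Fin d → Bool, v ≠ w ∧
      (S v ≠ v ∧ (S (S v) = S v ∨ c (S v) ≤ c v)) ∧ S w ≠ w ∧ c v < c w) :
    ∀ w : Fin d → Bool, S w ≠ w →
      ∃ k : ℕ, w = S^[k] (fun _ => false) ∧
        ∀ j < k, c (S^[j] (fun _ => false)) < c (S^[j + 1] (fun _ => false)) := by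
  set z : Fin d → Bool := fun _ => false with hz
  have hdist : ∀ v w : Fin d → Bool, S v ≠ v → S w ≠ w → v ≠ w → c v ≠ c w := by
    intro v w hv hw hne hceq
    exact hUFV1 ⟨v, w, hne, hv, hw, Or.inl hceq⟩
  have key : ∀ n : ℕ, ∀ w : Fin d → Bool, S w ≠ w → c w = n →
      ∃ k, w = S^[k] z ∧ ∀ j < k, c (S^[j] z) < c (S^[j + 1] z) := by
    intro n
    induction n using Nat.strong_induction_on with
    | _ n ih =>
      intro w hw hcw
      by_cases hwz : w = z
      · exact ⟨0, hwz, fun j hj => absurd hj (by omega)⟩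
      · have hcwpos : 0 < c w := by
          rcases Nat.eq_zero_or_pos (c w) with h0 | h
          · exact absurd (hc.trans h0.symm) (hdist z w hS hw (fun h => hwz h.symm))
          · exact h
        obtain ⟨v, hvmem, hvmax⟩ :=
          (Finset.univ.filter (fun v => S v ≠ v ∧ c v < c w)).exists_max_image c
            ⟨z, by simp [hS, hc, hcwpos]⟩
        simp only [Finset.mem_filter, Finset.mem_univ, true_and] at hvmem
        obtain ⟨hv, hvlt⟩ := hvmem
        have hvw : v ≠ w := fun h => by simp [h] at hvlt
        have hnotsol : ¬ (S (S v) = S v ∨ c (S v) ≤ c v) := by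
          intro h
          exact hUFV2 ⟨v, w, hvw, ⟨hv, h⟩, hw, hvlt⟩
        push_neg at hnotsol
        obtain ⟨hSv, hSvlt⟩ := hnotsol
        have hSvge : c w ≤ c (S v) := by
          by_contra hlt
          push_neg at hlt
          have := hvmax (S v) (by simp [hSv, hlt])
          omega
        have hSvw : S v = w := by
          by_contra hne
          have hne2 : c (S v) ≠ c w := hdist (S v) w hSv hw hne
          exact hUFV1 ⟨v, w, hvw, hv, hw, Or.inr ⟨hvlt, by omega⟩⟩
        obtain ⟨k, hkv, hkinc⟩ := ih (c v) (by omega) v hv rfl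
        refine ⟨k + 1, ?_, ?_⟩
        · rw [Function.iterate_succ_apply', ← hkv, hSvw]
        · intro j hj
          rcases Nat.lt_or_ge j k with hjk | hjk
          · exact hkinc j hjk
          · have : j = k := by omega
            subst this
            rw [Function.iterate_succ_apply', ← hkv, hSvw]
            exact hvlt
  intro w hw
  exact key (c w) w hw rfl
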